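/- Let W ⊆ E be a linear subspace that is stable under z (i.e. zW ⊆ W) and contained in im(z). Then the subspace (z^{-1}W) ∩ W^⊥ of E has complex dimension 2. -/

import Mathlib

open scoped ComplexInnerProductSpace

noncomputable section

abbrev E (N : ℕ) := EuclideanSpace ℂ (Fin N ⊕ Fin N)

def zmap (N : ℕ) : E N →ₗ[ℂ] E N where
  toFun v := WithLp.toLp 2 fun i =>
    match i with
    | Sum.inl j => if h : (j : ℕ) + 1 < N then v (Sum.inl ⟨(j : ℕ) + 1, h⟩) else 0
    | Sum.inr j => if h : (j : ℕ) + 1 < N then v (Sum.inr ⟨(j : ℕ) + 1, h⟩) else 0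
  map_add' u v := by
    ext i
    rcases i with j | j <;> simp only [PiLp.add_apply] <;> split <;> simp
  map_smul' c v := by
    ext i
    rcases i with j | j <;> simp only [PiLp.smul_apply, RingHom.id_apply, smul_eq_mul] <;>
      split <;> simp

def Cmap (N : ℕ) : E N →ₗ[ℂ] EuclideanSpace ℂ (Fin 2) where
  toFun v := WithLp.toLp 2 fun i => if i = 0 then ∑ j : Fin N, v (Sum.inl j) else ∑ j : Fin N, v (Sum.inr j)
  map_add' u v := by
    ext i
    by_cases h : i = (0 : Fin 2) <;> simp [h, PiLp.add_apply, Finset.sum_add_distrib]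
  map_smul' c v := by
    ext i
    by_cases h : i = (0 : Fin 2) <;> simp [h, PiLp.smul_apply, Finset.mul_sum]

/-- `Ym N m` : complete flags `0 = L_0 ⊊ L_1 ⊊ … ⊊ L_m` of `z`-stable subspaces of `E`
with `dim L_j = j`.  A tuple `(L_1,…,L_m) ∈ Y_m` is encoded as the function
`L : Fin (m+1) → Submodule ℂ (E N)` with the convention `L 0 = 0`. -/
def Ym (N m : ℕ) : Set (Fin (m + 1) → Submodule ℂ (E N)) :=
  {L | L 0 = ⊥ ∧ StrictMono L ∧ (∀ j : Fin (m + 1), Module.finrank ℂ (L j) = (j : ℕ)) ∧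
    ∀ j : Fin (m + 1), (L j).map (zmap N) ≤ L j}

/-- The map `φ_m`, in coordinates: `φ_m(L)_j = C(L_{j+1} ∩ L_j^⊥)` (0-based `j`),
i.e. the tuple `(C(L_1), C(L_2 ∩ L_1^⊥), …, C(L_m ∩ L_{m-1}^⊥))`. -/
def phiRaw (N m : ℕ) (L : Fin (m + 1) → Submodule ℂ (E N)) :
    Fin m → Submodule ℂ (EuclideanSpace ℂ (Fin 2)) :=
  fun j => ((L j.succ) ⊓ (L j.castSucc)ᗮ).map (Cmap N)

/-- `X_{m,i} = {(L_1,…,L_m) ∈ Y_m : L_{i+1} = z^{-1}(L_{i-1})}` (with `L_0 = 0`). -/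
def Xmi (N m i : ℕ) : Set (Fin (m + 1) → Submodule ℂ (E N)) :=
  {L | L ∈ Ym N m ∧ ∀ (h : i + 1 < m + 1) (h' : i - 1 < m + 1),
    L ⟨i + 1, h⟩ = (L ⟨i - 1, h'⟩).comap (zmap N)}

/-- `A_{m,i} = {(l_1,…,l_m) ∈ (ℙ¹)^m : l_{i+1} = l_i^⊥}`; a point of `(ℙ¹)^m` is encoded
as a tuple of rank-one subspaces of `ℂ²`, the line `l_k` sitting at 0-based index `k-1`. -/
def Ami (m i : ℕ) : Set (Fin m → Submodule ℂ (EuclideanSpace ℂ (Fin 2))) :=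
  {l | (∀ j, Module.finrank ℂ (l j) = 1) ∧
    ∀ (h : i < m) (h' : i - 1 < m), l ⟨i, h⟩ = (l ⟨i - 1, h'⟩)ᗮ}

/-- `q_{m,i}(L_1,…,L_m) = (L_1,…,L_{i-1}, zL_{i+2},…,zL_m)`. -/
def qRaw (N m i : ℕ) (hm : 2 ≤ m) (L : Fin (m + 1) → Submodule ℂ (E N)) :
    Fin (m - 2 + 1) → Submodule ℂ (E N) :=
  fun j =>
    if (j : ℕ) < i then L ⟨(j : ℕ), by have := j.isLt; omega⟩
    else (L ⟨(j : ℕ) + 2, by have := j.isLt; omega⟩).map (zmap N)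

/-- The forgetful map `g_{m,i}(l_1,…,l_m) = (l_1,…,l_{i-1}, l_{i+2},…,l_m)`. -/
def gRaw (m i : ℕ) (l : Fin m → Submodule ℂ (EuclideanSpace ℂ (Fin 2))) :
    Fin (m - 2) → Submodule ℂ (EuclideanSpace ℂ (Fin 2)) :=
  fun k =>
    if (k : ℕ) + 1 < i then l ⟨(k : ℕ), by have := k.isLt; omega⟩
    else l ⟨(k : ℕ) + 2, by have := k.isLt; omega⟩

/-- The involution `I_{2n}` of `(ℙ¹)^m`: `l_j ↦ l_j` for `j` odd, `l_j ↦ l_j^⊥` for `j` even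
(the line `l_j` sits at 0-based index `j-1`). -/
def Imap (m : ℕ) (l : Fin m → Submodule ℂ (EuclideanSpace ℂ (Fin 2))) :
    Fin m → Submodule ℂ (EuclideanSpace ℂ (Fin 2)) :=
  fun k => if (k : ℕ) % 2 = 0 then l k else (l k)ᗮ

/-- A crossingless matching of the `2n` points `{1,…,2n}`: a partition of `{1,…,2n}` into
`n` pairs (each pair recorded as `(i,j)` with `i < j`) such that there is no quadruple
`i < j < k < l` with `(i,k)` and `(j,l)` paired. -/
structure CrossinglessMatching (n : ℕ) where
  pairs : Finset (ℕ × ℕ)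
  card_eq : pairs.card = n
  lt : ∀ p ∈ pairs, p.1 < p.2
  mem_range : ∀ p ∈ pairs, 1 ≤ p.1 ∧ p.2 ≤ 2 * n
  cover : ∀ k, 1 ≤ k → k ≤ 2 * n → ∃! p, p ∈ pairs ∧ (p.1 = k ∨ p.2 = k)
  noncross : ∀ i j k l : ℕ, i < j → j < k → k < l → (i, k) ∈ pairs → (j, l) ∉ pairs

open Fin.NatCast

/-- `{(L_1,…,L_m) ∈ Y_m : L_{s_a(j)} = z^{-d_a(j)} L_{j-1} for all j ∈ O_a}`, where for a
pair `(i,j)` of the matching, `s_a(i) = j`, `d_a(i) = (j-i+1)/2`, and `z^{-d}` is the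
`d`-fold preimage under `z`. -/
def KaSet (N m : ℕ) (pairs : Finset (ℕ × ℕ)) : Set (Fin (m + 1) → Submodule ℂ (E N)) :=
  {L | L ∈ Ym N m ∧ ∀ p ∈ pairs,
    L ((p.2 : Fin (m + 1))) =
      (L ((p.1 - 1 : ℕ) : Fin (m + 1))).comap ((zmap N) ^ ((p.2 - p.1 + 1) / 2))}

/-- `S_a = {(l_1,…,l_{2n}) ∈ (ℙ¹)^{2n} : l_{s_a(j)} = l_j ∀ j ∈ O_a}` (0-based indexing, so
`l_k` sits at index `k-1`). -/
def SaSet (m : ℕ) (pairs : Finset (ℕ × ℕ)) :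
    Set (Fin m → Submodule ℂ (EuclideanSpace ℂ (Fin 2))) :=
  {l | (∀ j, Module.finrank ℂ (l j) = 1) ∧
    ∀ p ∈ pairs, ∀ (h2 : p.2 - 1 < m) (h1 : p.1 - 1 < m), l ⟨p.2 - 1, h2⟩ = l ⟨p.1 - 1, h1⟩}

/-- `T_a = {(l_1,…,l_{2n}) ∈ (ℙ¹)^{2n} : l_{s_a(j)} = l_j^⊥ ∀ j ∈ O_a}`. -/
def TaSet (m : ℕ) (pairs : Finset (ℕ × ℕ)) :
    Set (Fin m → Submodule ℂ (EuclideanSpace ℂ (Fin 2))) :=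
  {l | (∀ j, Module.finrank ℂ (l j) = 1) ∧
    ∀ p ∈ pairs, ∀ (h2 : p.2 - 1 < m) (h1 : p.1 - 1 < m), l ⟨p.2 - 1, h2⟩ = (l ⟨p.1 - 1, h1⟩)ᗮ}

lemma mem_ker_zmap (N : ℕ) (v : E N) (hv : v ∈ LinearMap.ker (zmap N))
    (k : Fin N) (hk : 0 < (k : ℕ)) : v (Sum.inl k) = 0 ∧ v (Sum.inr k) = 0 := by
  have h := LinearMap.mem_ker.mp hv
  have hkN : (k : ℕ) - 1 + 1 < N := by omega
  have h1 : (zmap N v) (Sum.inl ⟨(k : ℕ) - 1, by omega⟩) = 0 := by rw [h]; rfl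
  have h2 : (zmap N v) (Sum.inr ⟨(k : ℕ) - 1, by omega⟩) = 0 := by rw [h]; rfl
  simp only [zmap, LinearMap.coe_mk, AddHom.coe_mk, PiLp.toLp_apply] at h1 h2
  rw [dif_pos hkN] at h1 h2
  have hkk : (⟨(k : ℕ) - 1 + 1, hkN⟩ : Fin N) = k := by
    apply Fin.ext; simp only [Fin.val_mk]; omega
  rw [hkk] at h1 h2
  exact ⟨h1, h2⟩

lemma finrank_ker_zmap (N : ℕ) (hN : 1 ≤ N) :
    Module.finrank ℂ (LinearMap.ker (zmap N)) = 2 := by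
  have h0 : (0 : ℕ) < N := hN
  let Φ : LinearMap.ker (zmap N) ≃ₗ[ℂ] (ℂ × ℂ) :=
    { toFun := fun v => (v.1 (Sum.inl ⟨0, h0⟩), v.1 (Sum.inr ⟨0, h0⟩))
      map_add' := fun u v => by simp [PiLp.add_apply]
      map_smul' := fun c v => by simp [PiLp.smul_apply]
      invFun := fun a =>
        ⟨WithLp.toLp 2 fun i => match i with
          | Sum.inl j => if (j : ℕ) = 0 then a.1 else 0
          | Sum.inr j => if (j : ℕ) = 0 then a.2 else 0, by
          rw [LinearMap.mem_ker]
          ext i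
          rcases i with j | j <;>
            simp only [zmap, LinearMap.coe_mk, AddHom.coe_mk, PiLp.zero_apply, PiLp.toLp_apply] <;>
            split <;> simp⟩
      left_inv := fun v => by
        ext i
        rcases i with j | j
        · by_cases hj : (j : ℕ) = 0
          · have hje : j = ⟨0, h0⟩ := by apply Fin.ext; simp only [Fin.val_mk]; omega
            rw [hje]; simp
          · simp only [if_neg hj]
            exact ((mem_ker_zmap N v.1 v.2 j (by omega)).1).symm
        · by_cases hj : (j : ℕ) = 0
          · have hje : j = ⟨0, h0⟩ := by apply Fin.ext; simp only [Fin.val_mk]; omega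
            rw [hje]; simp
          · simp only [if_neg hj]
            exact ((mem_ker_zmap N v.1 v.2 j (by omega)).2).symm
      right_inv := fun a => by simp }
  rw [LinearEquiv.finrank_eq Φ]
  simp

theorem dim_preimage_inter_orthogonal_eq_two (N : ℕ) (hN : 1 ≤ N)
    (W : Submodule ℂ (E N)) (hstab : W.map (zmap N) ≤ W)
    (him : W ≤ LinearMap.range (zmap N)) :
    Module.finrank ℂ (↥(W.comap (zmap N) ⊓ Wᗮ)) = 2 := by
  set U : Submodule ℂ (E N) := W.comap (zmap N) with hU
  have hWU : W ≤ U := Submodule.map_le_iff_le_comap.mp hstab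
  have hkerU : LinearMap.ker (zmap N) ≤ U := fun x hx => by
    simp only [hU, Submodule.mem_comap, LinearMap.mem_ker.mp hx]
    exact W.zero_mem
  -- finrank U = finrank W + 2
  have hrank : Module.finrank ℂ U = Module.finrank ℂ W + 2 := by
    have h1 := LinearMap.finrank_range_add_finrank_ker ((zmap N).domRestrict U)
    have h2 : LinearMap.range ((zmap N).domRestrict U) = W := by
      rw [LinearMap.range_domRestrict, hU, Submodule.map_comap_eq_self him]
    have h3 : Module.finrank ℂ (LinearMap.ker ((zmap N).domRestrict U)) =
        Module.finrank ℂ (LinearMap.ker (zmap N)) := by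
      rw [LinearMap.ker_domRestrict]
      exact LinearEquiv.finrank_eq (Submodule.comapSubtypeEquivOfLe hkerU)
    rw [h2, h3, finrank_ker_zmap N hN] at h1
    exact h1.symm
  -- U = W ⊔ (U ⊓ Wᗮ)
  have hsup : W ⊔ (U ⊓ Wᗮ) = U := by
    have := Submodule.sup_orthogonal_of_hasOrthogonalProjection (K := W)
    calc W ⊔ U ⊓ Wᗮ = (W ⊔ Wᗮ) ⊓ U := by
            rw [sup_inf_assoc_of_le _ hWU, inf_comm U Wᗮ]
      _ = U := by rw [this, top_inf_eq]
  have hinf : W ⊓ (U ⊓ Wᗮ) = ⊥ := by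
    rw [inf_comm U Wᗮ, ← inf_assoc, Submodule.inf_orthogonal_eq_bot, bot_inf_eq]
  have h := Submodule.finrank_sup_add_finrank_inf_eq W (U ⊓ Wᗮ)
  rw [hsup, hinf] at h
  simp only [finrank_bot, add_zero, hrank] at h
  omega
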